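/- arXiv:2408.12324 — 3 statements merged into one kernel-verified Lean document; each statement's English description precedes it below -/
import Mathlib

section
/- For n = 1, the vector w₃ = −√2·(x ⊗ v₀) + 1 ⊗ v₁ + x² ⊗ v₂ in ℂ[x] ⊗ ℂ^{1|2} is annihilated by the action X_{−δ}(x^k ⊗ v_j) = (1/√2)k x^{k−1} ⊗ v_j + (−1)^k x^k ⊗ T_{−1}(v_j), where T_{−1}(v₀) = −v₂, T_{−1}(v₁) = v₀, T_{−1}(v₂) = 0. -/
open Finsupp

noncomputable section

abbrev V (n : ℕ) : Type := ((Fin n →₀ ℕ) × Fin (2*n+1)) →₀ ℂ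

def b {n : ℕ} (k : Fin n →₀ ℕ) (j : Fin (2*n+1)) : V n := Finsupp.single (k, j) 1

def mkOp {n : ℕ} (g : (Fin n →₀ ℕ) × Fin (2*n+1) → V n) : V n →ₗ[ℂ] V n :=
  Finsupp.lsum ℂ fun a => LinearMap.toSpanSingleton ℂ (V n) (g a)

def deg {n : ℕ} (k : Fin n →₀ ℕ) : ℕ := k.sum fun _ v => v

def sgn {n : ℕ} (k : Fin n →₀ ℕ) : ℂ := (-1) ^ deg k

def rt2 : ℂ := Real.sqrt 2

def idx0 {n : ℕ} : Fin (2*n+1) := ⟨0, by omega⟩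

def idxLo {n : ℕ} (i : Fin n) : Fin (2*n+1) := ⟨i.1+1, by have := i.isLt; omega⟩

def idxHi {n : ℕ} (i : Fin n) : Fin (2*n+1) := ⟨n+i.1+1, by have := i.isLt; omega⟩

/-- `T_i` applied to `x^k ⊗ v_j` (without the parity sign). -/
def TpApp {n : ℕ} (i : Fin n) (k : Fin n →₀ ℕ) (j : Fin (2*n+1)) : V n :=
  if j = idx0 then b k (idxLo i) else if j = idxHi i then b k idx0 else 0

/-- `T_{-i}` applied to `x^k ⊗ v_j` (without the parity sign). -/
def TmApp {n : ℕ} (i : Fin n) (k : Fin n →₀ ℕ) (j : Fin (2*n+1)) : V n :=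
  if j = idx0 then -(b k (idxHi i)) else if j = idxLo i then b k idx0 else 0

/-- The action of the odd root vector `X_{δ_j}` on `ℂ[x] ⊗ ℂ^{1|2n}`. -/
def Xplus {n : ℕ} (jj : Fin n) : V n →ₗ[ℂ] V n :=
  mkOp fun p => rt2⁻¹ • b (p.1 + Finsupp.single jj 1) p.2 + sgn p.1 • TpApp jj p.1 p.2

/-- The action of the odd root vector `X_{-δ_i}` on `ℂ[x] ⊗ ℂ^{1|2n}`. -/
def Xminus {n : ℕ} (i : Fin n) : V n →ₗ[ℂ] V n :=
  mkOp fun p => (rt2⁻¹ * (p.1 i : ℂ)) • b (p.1 - Finsupp.single i 1) p.2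
    + sgn p.1 • TmApp i p.1 p.2

/-- `Γ_{w₂} = 1⊗1 + √2 ∑ ∂_i ⊗ T_i - √2 ∑ x_i ⊗ T_{-i}`. -/
def Gamma2 {n : ℕ} : V n →ₗ[ℂ] V n :=
  mkOp fun p => b p.1 p.2
    + rt2 • ∑ i : Fin n, (sgn p.1 * (p.1 i : ℂ)) • TpApp i (p.1 - Finsupp.single i 1) p.2
    - rt2 • ∑ i : Fin n, sgn p.1 • TmApp i (p.1 + Finsupp.single i 1) p.2

/-- `Γ_{w₁} = 1⊗1 - √2 ∑ ∂_i ⊗ T_i + √2 ∑ x_i ⊗ T_{-i}`. -/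
def Gamma1 {n : ℕ} : V n →ₗ[ℂ] V n :=
  mkOp fun p => b p.1 p.2
    - rt2 • ∑ i : Fin n, (sgn p.1 * (p.1 i : ℂ)) • TpApp i (p.1 - Finsupp.single i 1) p.2
    + rt2 • ∑ i : Fin n, sgn p.1 • TmApp i (p.1 + Finsupp.single i 1) p.2

/-- For `n = 1`, `w₃ = -√2 (x ⊗ v₀) + 1 ⊗ v₁ + x² ⊗ v₂` is annihilated by `X_{-δ}`. -/
theorem stmt6 :
    Xminus (n := 1) 0 ((-rt2) • b (Finsupp.single 0 1) idx0 + b 0 (idxLo 0)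
      + b (Finsupp.single 0 2) (idxHi 0)) = 0 := by
  have h2 : rt2 * rt2 = 2 := by
    have h : (Real.sqrt 2) * (Real.sqrt 2) = 2 := Real.mul_self_sqrt (by norm_num)
    simpa [rt2, ← Complex.ofReal_mul] using congrArg Complex.ofReal h
  have hne : rt2 ≠ 0 := by
    intro h; rw [h, mul_zero] at h2; norm_num at h2
  have h3 : rt2⁻¹ * 2 = rt2 := by
    rw [inv_mul_eq_div, div_eq_iff hne]; exact h2.symm
  have hsub : (Finsupp.single 0 2 - Finsupp.single 0 1 : Fin 1 →₀ ℕ) = Finsupp.single 0 1 := by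
    rw [show (2:ℕ) = 1+1 from rfl, Finsupp.single_add, add_tsub_cancel_right]
  have hsub1 : (Finsupp.single 0 1 - Finsupp.single 0 1 : Fin 1 →₀ ℕ) = 0 := by
    simp
  have hdeg1 : deg (Finsupp.single (0:Fin 1) 1) = 1 := by
    simp [deg, Finsupp.sum_single_index]
  have hdeg2 : deg (Finsupp.single (0:Fin 1) 2) = 2 := by
    simp [deg, Finsupp.sum_single_index]
  have hdeg0 : deg (0 : Fin 1 →₀ ℕ) = 0 := by simp [deg]
  simp only [Xminus, mkOp, b, map_add, map_smul, Finsupp.lsum_single,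
    LinearMap.toSpanSingleton_apply, one_smul, hsub, hsub1, sgn, hdeg1, hdeg2, hdeg0,
    TmApp, idx0, idxLo, idxHi, Fin.mk.injEq, Finsupp.single_apply, Finsupp.coe_zero,
    Pi.zero_apply]
  norm_num [smul_smul, smul_neg, Finsupp.smul_single, mul_inv_cancel₀ hne, h3]
end
end

section
/- For n = 1, the space of vectors in ℂ[x] ⊗ ℂ³ annihilated by the single positive odd root operator X_{−δ} is exactly 3-dimensional, spanned by 1 ⊗ v₂, 1 ⊗ v₀ + √2·x ⊗ v₂, and −√2·x ⊗ v₀ + 1 ⊗ v₁ + x² ⊗ v₂. -/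
open Finsupp

noncomputable section

lemma rt2_ne : rt2 ≠ 0 := by
  simp only [rt2, ne_eq, Complex.ofReal_eq_zero]
  positivity

lemma rt2_sq : rt2 * rt2 = 2 := by
  rw [rt2, ← Complex.ofReal_mul, Real.mul_self_sqrt (by norm_num)]
  norm_num

lemma fin1_eq (k k' : Fin 1 →₀ ℕ) (h : k 0 = k' 0) : k = k' := by
  apply Finsupp.ext
  intro i
  have hi : i = 0 := Subsingleton.elim _ _
  rw [hi, h]

lemma mkOp_point (g : (Fin 1 →₀ ℕ) × Fin 3 → V 1) (f : V 1) (p : (Fin 1 →₀ ℕ) × Fin 3) :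
    mkOp g f p = f.sum fun a c => c * g a p := by
  rw [mkOp, Finsupp.lsum_apply, Finsupp.sum_apply]
  simp [LinearMap.toSpanSingleton_apply]

lemma sum_delta (f : V 1) (a₀ : (Fin 1 →₀ ℕ) × Fin 3) (e : ℂ) :
    (f.sum fun a c => c * (if a = a₀ then e else 0)) = f a₀ * e := by
  classical
  rw [Finsupp.sum]
  rw [show (∑ a ∈ f.support, f a * (if a = a₀ then e else 0)) =
      ∑ a ∈ f.support, (if a = a₀ then f a * e else 0) from
    Finset.sum_congr rfl (fun a _ => by split <;> simp)]
  rw [Finset.sum_ite_eq' f.support a₀ (fun a => f a * e)]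
  split
  · rfl
  · simp [Finsupp.notMem_support_iff.mp (by assumption)]

lemma ne01 : (idx0 : Fin (2*1+1)) ≠ idxLo 0 := by decide
lemma ne02 : (idx0 : Fin (2*1+1)) ≠ idxHi 0 := by decide
lemma ne12 : (idxLo (0 : Fin 1)) ≠ idxHi 0 := by decide

lemma derivA (k : Fin 1 →₀ ℕ) (j : Fin 3) (a : (Fin 1 →₀ ℕ) × Fin 3) :
    ((rt2⁻¹ * (a.1 0 : ℂ)) • b (a.1 - Finsupp.single 0 1) a.2) (k, j)
      = if a = (k + Finsupp.single 0 1, j) then rt2⁻¹ * ((k 0 : ℂ) + 1) else 0 := by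
  by_cases h : a = (k + Finsupp.single 0 1, j)
  · subst h
    rw [if_pos rfl]
    have h1 : (k + Finsupp.single (0 : Fin 1) 1) - Finsupp.single 0 1 = k :=
      add_tsub_cancel_right k _
    have h2 : ((k + Finsupp.single (0 : Fin 1) 1 : Fin 1 →₀ ℕ)) 0 = k 0 + 1 := by
      simp [Finsupp.add_apply]
    simp [h1, h2, b, Finsupp.single_apply, Finsupp.smul_apply]
  · rw [if_neg h]
    by_cases h2 : ((a.1 - Finsupp.single 0 1 : Fin 1 →₀ ℕ), a.2) = (k, j)
    · have hk : a.1 - Finsupp.single 0 1 = k := (Prod.mk.injEq _ _ _ _ ▸ h2).1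
      have hj : a.2 = j := (Prod.mk.injEq _ _ _ _ ▸ h2).2
      have hz : a.1 0 = 0 := by
        by_contra hz
        obtain ⟨m, hm⟩ := Nat.exists_eq_succ_of_ne_zero hz
        apply h
        have hk0 : k 0 = m := by
          have := congrArg (fun q => q 0) hk
          simpa [Finsupp.tsub_apply, Finsupp.single_apply, hm] using this.symm
        have : a.1 = k + Finsupp.single 0 1 := by
          apply fin1_eq
          simp [Finsupp.add_apply, Finsupp.single_apply, hm, hk0]
        rw [Prod.ext_iff]
        exact ⟨this, hj⟩
      simp [hz]
    · simp only [Finsupp.smul_apply, smul_eq_mul, b, Finsupp.single_apply, if_neg h2,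
        mul_zero]

lemma Tm0 (a : (Fin 1 →₀ ℕ) × Fin 3) (k : Fin 1 →₀ ℕ) :
    ((sgn a.1 • TmApp 0 a.1 a.2 : V 1)) (k, idx0)
      = if a = (k, (idxLo 0 : Fin (2*1+1))) then sgn k else 0 := by
  obtain ⟨m, j'⟩ := a
  simp only [Finsupp.smul_apply, smul_eq_mul]
  by_cases h1 : j' = (idx0 : Fin (2*1+1))
  · subst h1
    rw [TmApp, if_pos rfl]
    simp [b, Finsupp.single_apply, Prod.ext_iff, ne02.symm, ne01]
  · by_cases h2 : j' = (idxLo 0 : Fin (2*1+1))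
    · subst h2
      rw [TmApp, if_neg h1, if_pos rfl]
      by_cases h3 : m = k
      · subst h3
        simp [b, Finsupp.single_apply]
      · simp [b, Finsupp.single_apply, Prod.ext_iff, h3]
    · rw [TmApp, if_neg h1, if_neg h2]
      simp [Prod.ext_iff, h2]

lemma TmLo (a : (Fin 1 →₀ ℕ) × Fin 3) (k : Fin 1 →₀ ℕ) :
    ((sgn a.1 • TmApp 0 a.1 a.2 : V 1)) (k, idxLo 0) = 0 := by
  obtain ⟨m, j'⟩ := a
  simp only [Finsupp.smul_apply, smul_eq_mul]
  rw [TmApp]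
  split_ifs
  · simp [b, Finsupp.single_apply, Prod.ext_iff, ne12, ne12.symm]
  · simp [b, Finsupp.single_apply, Prod.ext_iff, ne01, ne01.symm]
  · simp

lemma TmHi (a : (Fin 1 →₀ ℕ) × Fin 3) (k : Fin 1 →₀ ℕ) :
    ((sgn a.1 • TmApp 0 a.1 a.2 : V 1)) (k, idxHi 0)
      = if a = (k, (idx0 : Fin (2*1+1))) then -sgn k else 0 := by
  obtain ⟨m, j'⟩ := a
  simp only [Finsupp.smul_apply, smul_eq_mul]
  by_cases h1 : j' = (idx0 : Fin (2*1+1))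
  · subst h1
    rw [TmApp, if_pos rfl]
    by_cases h3 : m = k
    · subst h3
      simp [b, Finsupp.single_apply]
    · simp [b, Finsupp.single_apply, Prod.ext_iff, h3]
  · rw [TmApp, if_neg h1]
    have hne : ((m, j') : (Fin 1 →₀ ℕ) × Fin (2*1+1)) ≠ (k, idx0) := by
      simp [Prod.ext_iff, h1]
    split_ifs with h2
    · simp [b, Finsupp.single_apply, Prod.ext_iff, ne02, ne02.symm, hne]
    · simp [hne]

lemma Xm0 (f : V 1) (k : Fin 1 →₀ ℕ) :
    Xminus (n:=1) 0 f (k, idx0)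
      = f (k + Finsupp.single 0 1, idx0) * (rt2⁻¹ * ((k 0 : ℂ) + 1))
        + f (k, idxLo 0) * sgn k := by
  rw [Xminus, mkOp_point]
  rw [show (fun (a : (Fin 1 →₀ ℕ) × Fin 3) (c : ℂ) =>
      c * (((rt2⁻¹ * (a.1 0 : ℂ)) • b (a.1 - Finsupp.single 0 1) a.2
            + sgn a.1 • TmApp 0 a.1 a.2 : V 1)) (k, idx0))
    = fun a c =>
      c * (if a = (k + Finsupp.single 0 1, (idx0 : Fin (2*1+1))) then rt2⁻¹ * ((k 0:ℂ)+1) else 0)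
      + c * (if a = (k, (idxLo 0 : Fin (2*1+1))) then sgn k else 0) from
    funext fun a => funext fun c => by
      rw [Finsupp.add_apply, derivA, Tm0, mul_add]]
  rw [Finsupp.sum_add, sum_delta, sum_delta]

lemma XmLo (f : V 1) (k : Fin 1 →₀ ℕ) :
    Xminus (n:=1) 0 f (k, idxLo 0)
      = f (k + Finsupp.single 0 1, idxLo 0) * (rt2⁻¹ * ((k 0 : ℂ) + 1)) := by
  rw [Xminus, mkOp_point]
  rw [show (fun (a : (Fin 1 →₀ ℕ) × Fin 3) (c : ℂ) =>
      c * (((rt2⁻¹ * (a.1 0 : ℂ)) • b (a.1 - Finsupp.single 0 1) a.2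
            + sgn a.1 • TmApp 0 a.1 a.2 : V 1)) (k, idxLo 0))
    = fun a c =>
      c * (if a = (k + Finsupp.single 0 1, (idxLo 0 : Fin (2*1+1))) then rt2⁻¹ * ((k 0:ℂ)+1) else 0) from
    funext fun a => funext fun c => by
      rw [Finsupp.add_apply, derivA, TmLo, add_zero]]
  rw [sum_delta]

lemma XmHi (f : V 1) (k : Fin 1 →₀ ℕ) :
    Xminus (n:=1) 0 f (k, idxHi 0)
      = f (k + Finsupp.single 0 1, idxHi 0) * (rt2⁻¹ * ((k 0 : ℂ) + 1))
        + f (k, idx0) * (-sgn k) := by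
  rw [Xminus, mkOp_point]
  rw [show (fun (a : (Fin 1 →₀ ℕ) × Fin 3) (c : ℂ) =>
      c * (((rt2⁻¹ * (a.1 0 : ℂ)) • b (a.1 - Finsupp.single 0 1) a.2
            + sgn a.1 • TmApp 0 a.1 a.2 : V 1)) (k, idxHi 0))
    = fun a c =>
      c * (if a = (k + Finsupp.single 0 1, (idxHi 0 : Fin (2*1+1))) then rt2⁻¹ * ((k 0:ℂ)+1) else 0)
      + c * (if a = (k, (idx0 : Fin (2*1+1))) then -sgn k else 0) from
    funext fun a => funext fun c => by
      rw [Finsupp.add_apply, derivA, TmHi, mul_add]]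
  rw [Finsupp.sum_add, sum_delta, sum_delta]

lemma b_apply (m' m : ℕ) (j' j : Fin 3) :
    (b (Finsupp.single 0 m') j' : V 1) (Finsupp.single 0 m, j)
      = if m' = m ∧ j' = j then 1 else 0 := by
  rw [b, Finsupp.single_apply]
  congr 1
  simp [Prod.ext_iff, (Finsupp.single_injective (0 : Fin 1)).eq_iff]

lemma single_zero' : (0 : Fin 1 →₀ ℕ) = Finsupp.single 0 0 := (Finsupp.single_zero 0).symm

lemma b0_apply (m : ℕ) (j' j : Fin 3) :
    (b 0 j' : V 1) (Finsupp.single 0 m, j) = if 0 = m ∧ j' = j then 1 else 0 := by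
  rw [show (b 0 j' : V 1) = b (Finsupp.single 0 0) j' from by rw [← single_zero'], b_apply]

lemma deg_single (m : ℕ) : deg (Finsupp.single (0 : Fin 1) m) = m := by
  rw [deg]
  exact Finsupp.sum_single_index rfl

lemma sgn_single (m : ℕ) : sgn (Finsupp.single (0 : Fin 1) m) = (-1) ^ m := by
  rw [sgn, deg_single]

lemma ssucc (m : ℕ) :
    Finsupp.single (0 : Fin 1) m + Finsupp.single 0 1 = Finsupp.single 0 (m + 1) :=
  (Finsupp.single_add 0 m 1).symm

lemma single_val (m : ℕ) : (Finsupp.single (0 : Fin 1) m) 0 = m := by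
  simp

lemma jcases (j : Fin 3) : j = (idx0 : Fin (2*1+1)) ∨ j = (idxLo 0 : Fin (2*1+1)) ∨ j = (idxHi 0 : Fin (2*1+1)) := by
  fin_cases j <;> simp [idx0, idxLo, idxHi]

lemma pt_rw (k : Fin 1 →₀ ℕ) : k = Finsupp.single 0 (k 0) := fin1_eq _ _ (by simp)

lemma rt2_inv_mul : rt2⁻¹ * rt2 = 1 := inv_mul_cancel₀ rt2_ne

lemma kerE0 : Xminus (n:=1) 0 (b 0 (idxHi 0)) = 0 := by
  apply Finsupp.ext
  intro p
  obtain ⟨k, j⟩ := p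
  rw [pt_rw k]
  rcases jcases j with h | h | h <;> subst h
  · rw [Xm0]
    simp [ssucc, b0_apply, sgn_single, single_val, -Finsupp.single_add,
      ne01, ne02, ne12, ne01.symm, ne02.symm, ne12.symm]
  · rw [XmLo]
    simp [ssucc, b0_apply, single_val, -Finsupp.single_add, ne12, ne12.symm]
  · rw [XmHi]
    simp [ssucc, b0_apply, sgn_single, single_val, -Finsupp.single_add,
      ne01, ne02, ne12, ne01.symm, ne02.symm, ne12.symm]

lemma kerE1 : Xminus (n:=1) 0 (b 0 idx0 + rt2 • b (Finsupp.single 0 1) (idxHi 0)) = 0 := by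
  apply Finsupp.ext
  intro p
  obtain ⟨k, j⟩ := p
  rw [pt_rw k]
  rcases jcases j with h | h | h <;> subst h
  · rw [Xm0]
    simp [ssucc, b0_apply, b_apply, sgn_single, single_val, Finsupp.add_apply,
      Finsupp.smul_apply, -Finsupp.single_add,
      ne01, ne02, ne12, ne01.symm, ne02.symm, ne12.symm]
  · rw [XmLo]
    simp [ssucc, b0_apply, b_apply, single_val, Finsupp.add_apply,
      Finsupp.smul_apply, -Finsupp.single_add,
      ne01, ne02, ne12, ne01.symm, ne02.symm, ne12.symm]
  · rw [XmHi]
    by_cases hm : k 0 = 0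
    · rw [hm]
      simp only [ssucc, b0_apply, b_apply, sgn_single, single_val, Finsupp.add_apply,
        Finsupp.smul_apply, smul_eq_mul, Finsupp.zero_apply]
      norm_num
      rw [mul_comm rt2 rt2⁻¹, rt2_inv_mul]
      norm_num
    · simp [ssucc, b0_apply, b_apply, sgn_single, single_val, Finsupp.add_apply,
        Finsupp.smul_apply, -Finsupp.single_add,
        ne01, ne02, ne12, ne01.symm, ne02.symm, ne12.symm, hm, Ne.symm hm,
        show (1:ℕ) ≠ k 0 + 1 from fun hh => hm (by omega)]

lemma kerE2 : Xminus (n:=1) 0 ((-rt2) • b (Finsupp.single 0 1) idx0 + b 0 (idxLo 0)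
    + b (Finsupp.single 0 2) (idxHi 0)) = 0 := by
  apply Finsupp.ext
  intro p
  obtain ⟨k, j⟩ := p
  rw [pt_rw k]
  rcases jcases j with h | h | h <;> subst h
  · rw [Xm0]
    by_cases hm : k 0 = 0
    · rw [hm]
      simp only [ssucc, b0_apply, b_apply, sgn_single, single_val, Finsupp.add_apply,
        Finsupp.smul_apply, smul_eq_mul, Finsupp.zero_apply,
        ne01, ne02, ne12]
      norm_num [ne01, ne01.symm, ne02.symm, ne12.symm]
      rw [mul_inv_cancel₀ rt2_ne]
      norm_num
    · simp [ssucc, b0_apply, b_apply, sgn_single, single_val, Finsupp.add_apply,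
        Finsupp.smul_apply, -Finsupp.single_add,
        ne01, ne02, ne12, ne01.symm, ne02.symm, ne12.symm, hm, Ne.symm hm,
        show (1:ℕ) ≠ k 0 + 1 from fun hh => hm (by omega)]
  · rw [XmLo]
    simp [ssucc, b0_apply, b_apply, single_val, Finsupp.add_apply,
      Finsupp.smul_apply, -Finsupp.single_add,
      ne01, ne02, ne12, ne01.symm, ne02.symm, ne12.symm]
  · rw [XmHi]
    by_cases hm : k 0 = 1
    · rw [hm]
      simp only [ssucc, b0_apply, b_apply, sgn_single, single_val, Finsupp.add_apply,
        Finsupp.smul_apply, smul_eq_mul, Finsupp.zero_apply,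
        ne01, ne02, ne12]
      norm_num [ne01, ne01.symm, ne02.symm, ne12.symm]
      have h2 : rt2 * rt2 = 2 := rt2_sq
      have h3 : rt2⁻¹ * 2 = rt2 := by
        rw [← h2, ← mul_assoc, rt2_inv_mul, one_mul]
      rw [h3]
      ring
    · simp [ssucc, b0_apply, b_apply, sgn_single, single_val, Finsupp.add_apply,
        Finsupp.smul_apply, -Finsupp.single_add,
        ne01, ne02, ne12, ne01.symm, ne02.symm, ne12.symm, hm, Ne.symm hm,
        show (2:ℕ) ≠ k 0 + 1 from fun hh => hm (by omega)]

lemma nz (m : ℕ) : (rt2⁻¹ * ((m : ℂ) + 1)) ≠ 0 :=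
  mul_ne_zero (inv_ne_zero rt2_ne) (Nat.cast_add_one_ne_zero m)

section kerdir
variable (f : V 1) (hf : Xminus (n:=1) 0 f = 0)
include hf

lemma hLo : ∀ m : ℕ, f (Finsupp.single 0 (m+1), idxLo 0) = 0 := by
  intro m
  have h := congrArg (fun w : V 1 => w (Finsupp.single 0 m, idxLo 0)) hf
  simp only [Finsupp.zero_apply] at h
  rw [XmLo, ssucc, single_val] at h
  exact (mul_eq_zero.mp h).resolve_right (nz m)

lemma h01 : f (Finsupp.single 0 1, idx0) = -rt2 * f (0, idxLo 0) := by
  have h := congrArg (fun w : V 1 => w (Finsupp.single 0 0, idx0)) hf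
  simp only [Finsupp.zero_apply] at h
  rw [Xm0, ssucc, single_val, sgn_single] at h
  norm_num at h
  field_simp [rt2_ne] at h
  linear_combination h

lemma h0m : ∀ m : ℕ, f (Finsupp.single 0 (m+2), idx0) = 0 := by
  intro m
  have h := congrArg (fun w : V 1 => w (Finsupp.single 0 (m+1), idx0)) hf
  simp only [Finsupp.zero_apply] at h
  rw [Xm0, ssucc, single_val, hLo f hf m, zero_mul, add_zero] at h
  exact (mul_eq_zero.mp h).resolve_right (by exact_mod_cast nz (m+1))

lemma hH1 : f (Finsupp.single 0 1, idxHi 0) = rt2 * f (0, idx0) := by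
  have h := congrArg (fun w : V 1 => w (Finsupp.single 0 0, idxHi 0)) hf
  simp only [Finsupp.zero_apply] at h
  rw [XmHi, ssucc, single_val, sgn_single] at h
  norm_num at h
  field_simp [rt2_ne] at h
  linear_combination h

lemma hH2 : f (Finsupp.single 0 2, idxHi 0) = f (0, idxLo 0) := by
  have h := congrArg (fun w : V 1 => w (Finsupp.single 0 1, idxHi 0)) hf
  simp only [Finsupp.zero_apply] at h
  rw [XmHi, ssucc, single_val, sgn_single, h01 f hf] at h
  norm_num at h
  field_simp [rt2_ne] at h
  linear_combination h / 2 + f (0, idxLo 0) * rt2_sq / 2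

lemma hHm : ∀ m : ℕ, f (Finsupp.single 0 (m+3), idxHi 0) = 0 := by
  intro m
  have h := congrArg (fun w : V 1 => w (Finsupp.single 0 (m+2), idxHi 0)) hf
  simp only [Finsupp.zero_apply] at h
  rw [XmHi, ssucc, single_val, h0m f hf m, zero_mul, add_zero] at h
  exact (mul_eq_zero.mp h).resolve_right (by exact_mod_cast nz (m+2))

end kerdir

lemma b_apply0 (m' : ℕ) (j' j : Fin 3) :
    (b (Finsupp.single 0 m') j' : V 1) (0, j) = if m' = 0 ∧ j' = j then 1 else 0 := by
  rw [show ((0 : Fin 1 →₀ ℕ), j) = (Finsupp.single 0 0, j) from by rw [← single_zero'], b_apply]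

lemma b00 (j' j : Fin 3) :
    (b 0 j' : V 1) ((0 : Fin 1 →₀ ℕ), j) = if j' = j then 1 else 0 := by
  rw [show ((0 : Fin 1 →₀ ℕ), j) = (Finsupp.single 0 0, j) from by rw [← single_zero'], b0_apply]
  simp

lemma ker_comb (f : V 1) (hf : Xminus (n:=1) 0 f = 0) :
    f = f (0, idxHi 0) • (b 0 (idxHi 0) : V 1)
      + f (0, idx0) • (b 0 idx0 + rt2 • b (Finsupp.single 0 1) (idxHi 0))
      + f (0, idxLo 0) • ((-rt2) • b (Finsupp.single 0 1) idx0 + b 0 (idxLo 0)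
          + b (Finsupp.single 0 2) (idxHi 0)) := by
  apply Finsupp.ext
  intro p
  obtain ⟨k, j⟩ := p
  rw [pt_rw k]
  generalize k 0 = m
  rcases jcases j with h | h | h <;> subst h <;> rcases m with _ | _ | _ | m
  · simp [Finsupp.add_apply, Finsupp.smul_apply, smul_eq_mul, b_apply, b0_apply, b00, b_apply0,
      -Finsupp.single_add, ne01, ne02, ne12, ne01.symm, ne02.symm, ne12.symm]
  · simp [Finsupp.add_apply, Finsupp.smul_apply, smul_eq_mul, b_apply, b0_apply, b00, b_apply0,
      -Finsupp.single_add, ne01, ne02, ne12, ne01.symm, ne02.symm, ne12.symm]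
    linear_combination h01 f hf
  · simp [Finsupp.add_apply, Finsupp.smul_apply, smul_eq_mul, b_apply, b0_apply, b00, b_apply0,
      -Finsupp.single_add, ne01, ne02, ne12, ne01.symm, ne02.symm, ne12.symm]
    exact h0m f hf 0
  · simp [Finsupp.add_apply, Finsupp.smul_apply, smul_eq_mul, b_apply, b0_apply, b00, b_apply0,
      -Finsupp.single_add, ne01, ne02, ne12, ne01.symm, ne02.symm, ne12.symm,
      (show (0:ℕ) ≠ m+1+1+1 by omega), (show (1:ℕ) ≠ m+1+1+1 by omega),
      (show (2:ℕ) ≠ m+1+1+1 by omega)]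
    exact h0m f hf (m+1)
  · simp [Finsupp.add_apply, Finsupp.smul_apply, smul_eq_mul, b_apply, b0_apply, b00, b_apply0,
      -Finsupp.single_add, ne01, ne02, ne12, ne01.symm, ne02.symm, ne12.symm]
  · simp [Finsupp.add_apply, Finsupp.smul_apply, smul_eq_mul, b_apply, b0_apply, b00, b_apply0,
      -Finsupp.single_add, ne01, ne02, ne12, ne01.symm, ne02.symm, ne12.symm]
    exact hLo f hf 0
  · simp [Finsupp.add_apply, Finsupp.smul_apply, smul_eq_mul, b_apply, b0_apply, b00, b_apply0,
      -Finsupp.single_add, ne01, ne02, ne12, ne01.symm, ne02.symm, ne12.symm]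
    exact hLo f hf 1
  · simp [Finsupp.add_apply, Finsupp.smul_apply, smul_eq_mul, b_apply, b0_apply, b00, b_apply0,
      -Finsupp.single_add, ne01, ne02, ne12, ne01.symm, ne02.symm, ne12.symm,
      (show (0:ℕ) ≠ m+1+1+1 by omega), (show (1:ℕ) ≠ m+1+1+1 by omega),
      (show (2:ℕ) ≠ m+1+1+1 by omega)]
    exact hLo f hf (m+2)
  · simp [Finsupp.add_apply, Finsupp.smul_apply, smul_eq_mul, b_apply, b0_apply, b00, b_apply0,
      -Finsupp.single_add, ne01, ne02, ne12, ne01.symm, ne02.symm, ne12.symm]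
  · simp [Finsupp.add_apply, Finsupp.smul_apply, smul_eq_mul, b_apply, b0_apply, b00, b_apply0,
      -Finsupp.single_add, ne01, ne02, ne12, ne01.symm, ne02.symm, ne12.symm]
    linear_combination hH1 f hf
  · simp [Finsupp.add_apply, Finsupp.smul_apply, smul_eq_mul, b_apply, b0_apply, b00, b_apply0,
      -Finsupp.single_add, ne01, ne02, ne12, ne01.symm, ne02.symm, ne12.symm]
    exact hH2 f hf
  · simp [Finsupp.add_apply, Finsupp.smul_apply, smul_eq_mul, b_apply, b0_apply, b00, b_apply0,
      -Finsupp.single_add, ne01, ne02, ne12, ne01.symm, ne02.symm, ne12.symm,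
      (show (0:ℕ) ≠ m+1+1+1 by omega), (show (1:ℕ) ≠ m+1+1+1 by omega),
      (show (2:ℕ) ≠ m+1+1+1 by omega)]
    exact hHm f hf m


/-- For `n = 1`, the kernel of `X_{-δ}` is exactly the 3-dimensional span of
`1 ⊗ v₂`, `1 ⊗ v₀ + √2 x ⊗ v₂`, and `-√2 x ⊗ v₀ + 1 ⊗ v₁ + x² ⊗ v₂`. -/
theorem stmt10 :
    LinearMap.ker (Xminus (n := 1) 0) =
      Submodule.span ℂ ({b 0 (idxHi 0),
        b 0 idx0 + rt2 • b (Finsupp.single 0 1) (idxHi 0),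
        (-rt2) • b (Finsupp.single 0 1) idx0 + b 0 (idxLo 0)
          + b (Finsupp.single 0 2) (idxHi 0)} : Set (V 1)) ∧
    Module.finrank ℂ ↥(LinearMap.ker (Xminus (n := 1) 0)) = 3 := by
  have hspan : LinearMap.ker (Xminus (n := 1) 0) =
      Submodule.span ℂ ({b 0 (idxHi 0),
        b 0 idx0 + rt2 • b (Finsupp.single 0 1) (idxHi 0),
        (-rt2) • b (Finsupp.single 0 1) idx0 + b 0 (idxLo 0)
          + b (Finsupp.single 0 2) (idxHi 0)} : Set (V 1)) := by
    apply le_antisymm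
    · intro f hfm
      have hf : Xminus (n:=1) 0 f = 0 := LinearMap.mem_ker.mp hfm
      rw [ker_comb f hf]
      refine Submodule.add_mem _ (Submodule.add_mem _ ?_ ?_) ?_
      · exact Submodule.smul_mem _ _ (Submodule.subset_span (by left; rfl))
      · exact Submodule.smul_mem _ _ (Submodule.subset_span (by right; left; rfl))
      · exact Submodule.smul_mem _ _ (Submodule.subset_span (by right; right; rfl))
    · rw [Submodule.span_le]
      rintro v (rfl | rfl | rfl)
      · exact LinearMap.mem_ker.mpr kerE0
      · exact LinearMap.mem_ker.mpr kerE1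
      · exact LinearMap.mem_ker.mpr kerE2
  refine ⟨hspan, ?_⟩
  rw [hspan]
  have hset : ({b 0 (idxHi 0),
        b 0 idx0 + rt2 • b (Finsupp.single 0 1) (idxHi 0),
        (-rt2) • b (Finsupp.single 0 1) idx0 + b 0 (idxLo 0)
          + b (Finsupp.single 0 2) (idxHi 0)} : Set (V 1))
      = Set.range ![b 0 (idxHi 0),
        b 0 idx0 + rt2 • b (Finsupp.single 0 1) (idxHi 0),
        (-rt2) • b (Finsupp.single 0 1) idx0 + b 0 (idxLo 0)
          + b (Finsupp.single 0 2) (idxHi 0)] := by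
    rw [Matrix.range_cons, Matrix.range_cons, Matrix.range_cons_empty,
      Set.singleton_union, Set.singleton_union]
  rw [hset]
  have hli : LinearIndependent ℂ ![(b 0 (idxHi 0) : V 1),
        b 0 idx0 + rt2 • b (Finsupp.single 0 1) (idxHi 0),
        (-rt2) • b (Finsupp.single 0 1) idx0 + b 0 (idxLo 0)
          + b (Finsupp.single 0 2) (idxHi 0)] := by
    rw [Fintype.linearIndependent_iff]
    intro g hg
    rw [Fin.sum_univ_three] at hg
    simp only [Matrix.cons_val_zero, Matrix.cons_val_one, Matrix.head_cons,
      Matrix.cons_val_two, Matrix.tail_cons] at hg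
    have h0 := congrArg (fun w : V 1 => w (0, idxHi 0)) hg
    have h1 := congrArg (fun w : V 1 => w (0, idx0)) hg
    have h2 := congrArg (fun w : V 1 => w (0, idxLo 0)) hg
    simp only [Finsupp.add_apply, Finsupp.smul_apply, smul_eq_mul, Finsupp.zero_apply,
      b00, b_apply0] at h0 h1 h2
    simp [ne01, ne02, ne12, ne01.symm, ne02.symm, ne12.symm] at h0 h1 h2
    intro i
    fin_cases i <;> assumption
  rw [finrank_span_eq_card hli]
  simp
end
end

section
/- With Γ₂ as above and X_{−δ_j} acting by X_{−δ_j}(x^k ⊗ v) = (1/√2)k_j x^{k−δ_j} ⊗ v + (−1)^{|k|} x^k ⊗ T_{−j}(v), the intertwining identity X_{−δ_j}(Γ₂(x^k ⊗ v₀)) = Γ₂(−(1/√2) k_j x^{k−δ_j} ⊗ v₀) holds for all multi-indices k ∈ ℤ_{≥0}ⁿ and all 1 ≤ j ≤ n. -/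
open Finsupp

noncomputable section

lemma mkOp_b {n : ℕ} (g : (Fin n →₀ ℕ) × Fin (2*n+1) → V n) (k : Fin n →₀ ℕ)
    (p : Fin (2*n+1)) : mkOp g (b k p) = g (k, p) := by
  simp [mkOp, b, Finsupp.lsum_single]

lemma deg_add_single {n : ℕ} (k : Fin n →₀ ℕ) (i : Fin n) :
    deg (k + Finsupp.single i 1) = deg k + 1 := by
  simp [deg, Finsupp.sum_add_index']

lemma sgn_add_single {n : ℕ} (k : Fin n →₀ ℕ) (i : Fin n) :
    sgn (k + Finsupp.single i 1) = -sgn k := by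
  rw [sgn, sgn, deg_add_single, pow_succ]; ring

lemma sub_add_cancel_single {n : ℕ} (k : Fin n →₀ ℕ) (j : Fin n) (h : k j ≠ 0) :
    (k - Finsupp.single j 1) + Finsupp.single j 1 = k := by
  apply tsub_add_cancel_of_le
  rw [Finsupp.single_le_iff]; omega

lemma sgn_sub_single {n : ℕ} (k : Fin n →₀ ℕ) (j : Fin n) (h : k j ≠ 0) :
    sgn (k - Finsupp.single j 1) = -sgn k := by
  conv_rhs => rw [← sub_add_cancel_single k j h, sgn_add_single]
  rw [neg_neg]

-- index facts
lemma idxLo_ne_idx0 {n : ℕ} (i : Fin n) : idxLo i ≠ idx0 := by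
  simp [idxLo, idx0, Fin.ext_iff]
lemma idxHi_ne_idx0 {n : ℕ} (i : Fin n) : idxHi i ≠ idx0 := by
  simp [idxHi, idx0, Fin.ext_iff]
lemma idxHi_ne_idxLo {n : ℕ} (i j : Fin n) : idxHi i ≠ idxLo j := by
  simp only [idxHi, idxLo, ne_eq, Fin.ext_iff]
  have := j.isLt; omega
lemma idxLo_eq_iff {n : ℕ} (i j : Fin n) : idxLo i = idxLo j ↔ i = j := by
  simp [idxLo, Fin.ext_iff]


-- more helpers
lemma sub_single_of_zero {n : ℕ} (k : Fin n →₀ ℕ) (j : Fin n) (h : k j = 0) :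
    k - Finsupp.single j 1 = k := by
  ext a
  rw [Finsupp.tsub_apply, Finsupp.single_apply]
  by_cases hj : j = a
  · subst hj; simp [h]
  · simp [hj]

lemma sgn_sub_single_mul {n : ℕ} (k : Fin n →₀ ℕ) (j : Fin n) :
    sgn (k - Finsupp.single j 1) * (k j : ℂ) = -(sgn k * (k j : ℂ)) := by
  by_cases h : k j = 0
  · simp [h]
  · rw [sgn_sub_single k j h]; ring

lemma sgn_mul_self {n : ℕ} (k : Fin n →₀ ℕ) : sgn k * sgn k = 1 := by
  rw [sgn, ← mul_pow]; norm_num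

lemma cross_nat {n : ℕ} (k : Fin n →₀ ℕ) (i j : Fin n) :
    k i * ((k - Finsupp.single i 1 : Fin n →₀ ℕ) j) = k j * ((k - Finsupp.single j 1 : Fin n →₀ ℕ) i) := by
  rw [Finsupp.tsub_apply, Finsupp.tsub_apply, Finsupp.single_apply, Finsupp.single_apply]
  by_cases h : i = j
  · subst h; simp
  · rw [if_neg h, if_neg fun hh => h hh.symm, Nat.sub_zero, Nat.sub_zero, Nat.mul_comm]

lemma add_sub_cancel_single {n : ℕ} (k : Fin n →₀ ℕ) (j : Fin n) :
    k + Finsupp.single j 1 - Finsupp.single j 1 = k := by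
  exact add_tsub_cancel_right _ _

lemma add_sub_comm_single {n : ℕ} (k : Fin n →₀ ℕ) (i j : Fin n) (h : k j ≠ 0) :
    k + Finsupp.single i 1 - Finsupp.single j 1
      = k - Finsupp.single j 1 + Finsupp.single i 1 := by
  ext a
  rw [Finsupp.tsub_apply, Finsupp.add_apply, Finsupp.add_apply, Finsupp.tsub_apply,
    Finsupp.single_apply, Finsupp.single_apply]
  by_cases hj : j = a
  · subst hj; simp only [if_pos rfl, if_true]
    omega
  · simp [hj]

lemma sub_sub_comm_single {n : ℕ} (k : Fin n →₀ ℕ) (i j : Fin n) :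
    k - Finsupp.single i 1 - Finsupp.single j 1
      = k - Finsupp.single j 1 - Finsupp.single i 1 := by
  rw [tsub_tsub, tsub_tsub, add_comm]

lemma hG {n : ℕ} (m : Fin n →₀ ℕ) : Gamma2 (b m idx0) =
    b m idx0
    + rt2 • ∑ i : Fin n, (sgn m * (m i : ℂ)) • b (m - Finsupp.single i 1) (idxLo i)
    + rt2 • ∑ i : Fin n, sgn m • b (m + Finsupp.single i 1) (idxHi i) := by
  rw [Gamma2, mkOp_b]
  simp only [TpApp, TmApp, if_pos rfl, ite_true, smul_neg, Finset.sum_neg_distrib,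
    sub_neg_eq_add, if_true]

lemma hX0 {n : ℕ} (j : Fin n) (m : Fin n →₀ ℕ) : Xminus j (b m idx0) =
    (rt2⁻¹ * (m j : ℂ)) • b (m - Finsupp.single j 1) idx0 - sgn m • b m (idxHi j) := by
  rw [Xminus, mkOp_b]
  simp only [TmApp, if_pos rfl, ite_true, if_true, smul_neg, ← sub_eq_add_neg]

lemma hXLo {n : ℕ} (j i : Fin n) (m : Fin n →₀ ℕ) : Xminus j (b m (idxLo i)) =
    (rt2⁻¹ * (m j : ℂ)) • b (m - Finsupp.single j 1) (idxLo i)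
    + (if i = j then sgn m • b m idx0 else 0) := by
  rw [Xminus, mkOp_b]
  congr 1
  by_cases h : i = j
  · subst h; simp [TmApp, idxLo_ne_idx0]
  · simp [TmApp, idxLo_ne_idx0, idxLo_eq_iff, h]

lemma hXHi {n : ℕ} (j i : Fin n) (m : Fin n →₀ ℕ) : Xminus j (b m (idxHi i)) =
    (rt2⁻¹ * (m j : ℂ)) • b (m - Finsupp.single j 1) (idxHi i) := by
  rw [Xminus, mkOp_b]
  simp [TmApp, idxHi_ne_idx0, idxHi_ne_idxLo]

lemma rt2_mul_inv : rt2 * rt2⁻¹ = 1 := mul_inv_cancel₀ rt2_ne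

lemma add_single_apply {n : ℕ} (k : Fin n →₀ ℕ) (x j : Fin n) :
    ((k + Finsupp.single x 1 : Fin n →₀ ℕ) j : ℕ) = k j + if x = j then 1 else 0 := by
  rw [Finsupp.add_apply, Finsupp.single_apply]

lemma eLo (n : ℕ) (k : Fin n →₀ ℕ) (j : Fin n) :
    ∑ x : Fin n, (rt2 * (sgn k * (k x : ℂ) * (rt2⁻¹ * (((k - Finsupp.single x 1 : Fin n →₀ ℕ) j : ℕ) : ℂ))))
        • b (k - Finsupp.single x 1 - Finsupp.single j 1) (idxLo x)
      = ∑ x : Fin n, (sgn k * (k x : ℂ) * (((k - Finsupp.single x 1 : Fin n →₀ ℕ) j : ℕ) : ℂ))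
        • b (k - Finsupp.single x 1 - Finsupp.single j 1) (idxLo x) := by
  refine Finset.sum_congr rfl fun x _ => ?_
  congr 1
  rw [show rt2 * (sgn k * (k x : ℂ) * (rt2⁻¹ * (((k - Finsupp.single x 1 : Fin n →₀ ℕ) j : ℕ) : ℂ)))
      = (rt2 * rt2⁻¹) * (sgn k * (k x : ℂ) * (((k - Finsupp.single x 1 : Fin n →₀ ℕ) j : ℕ) : ℂ)) by ring,
    rt2_mul_inv, one_mul]

lemma eHi (n : ℕ) (k : Fin n →₀ ℕ) (j : Fin n) :
    ∑ x : Fin n, (rt2 * (sgn k * (rt2⁻¹ * (((k + Finsupp.single x 1 : Fin n →₀ ℕ) j : ℕ) : ℂ))))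
        • b (k + Finsupp.single x 1 - Finsupp.single j 1) (idxHi x)
      = (∑ x : Fin n, (sgn k * (k j : ℂ))
          • b (k + Finsupp.single x 1 - Finsupp.single j 1) (idxHi x))
        + sgn k • b k (idxHi j) := by
  have hw : sgn k • b k (idxHi j)
      = ∑ x : Fin n, if x = j then sgn k • b (k + Finsupp.single x 1 - Finsupp.single j 1) (idxHi x) else 0 := by
    rw [Finset.sum_ite_eq', if_pos (Finset.mem_univ j), add_sub_cancel_single]
  rw [hw, ← Finset.sum_add_distrib]
  refine Finset.sum_congr rfl fun x _ => ?_
  by_cases h : x = j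
  · subst h
    rw [if_pos rfl, ← add_smul]
    congr 1
    rw [add_single_apply, if_pos rfl]
    push_cast
    rw [show rt2 * (sgn k * (rt2⁻¹ * ((k x : ℂ) + 1))) = (rt2 * rt2⁻¹) * (sgn k * ((k x:ℂ) + 1)) by ring,
      rt2_mul_inv]
    ring
  · rw [if_neg h, add_zero]
    congr 1
    rw [add_single_apply, if_neg h, add_zero,
      show rt2 * (sgn k * (rt2⁻¹ * ((k j : ℕ) : ℂ))) = (rt2 * rt2⁻¹) * (sgn k * ((k j : ℕ) : ℂ)) by ring,
      rt2_mul_inv, one_mul]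

lemma e0 (n : ℕ) (k : Fin n →₀ ℕ) (j : Fin n) :
    (-rt2⁻¹ * (k j : ℂ)) = rt2⁻¹ * (k j : ℂ) + rt2 * (sgn k * (k j : ℂ) * sgn (k - Finsupp.single j 1)) := by
  have h7 : sgn k * (k j : ℂ) * sgn (k - Finsupp.single j 1) = -(k j : ℂ) := by
    rw [show sgn k * (k j : ℂ) * sgn (k - Finsupp.single j 1)
        = sgn k * (sgn (k - Finsupp.single j 1) * (k j : ℂ)) by ring,
      sgn_sub_single_mul,
      show sgn k * -(sgn k * (k j:ℂ)) = -((sgn k * sgn k) * (k j:ℂ)) by ring,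
      sgn_mul_self, one_mul]
  rw [h7]
  have h2 := rt2_sq
  have hne := rt2_ne
  field_simp
  linear_combination (k j : ℂ) * h2


/-- Intertwining identity `X_{-δⱼ} ∘ Γ₂ = Γ₂ ∘ (-(1/√2) kⱼ ·)` on `x^k ⊗ v₀`. -/
theorem stmt13 (n : ℕ) (k : Fin n →₀ ℕ) (j : Fin n) :
    Xminus j (Gamma2 (b k idx0)) =
      Gamma2 ((-rt2⁻¹ * (k j : ℂ)) • b (k - Finsupp.single j 1) idx0) := by
  have hLHS : Xminus j (Gamma2 (b k idx0)) =
      (-rt2⁻¹ * (k j : ℂ)) • b (k - Finsupp.single j 1) idx0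
      + ∑ i : Fin n, (sgn k * (k i : ℂ) * (((k - Finsupp.single i 1 : Fin n →₀ ℕ) j : ℕ) : ℂ))
          • b (k - Finsupp.single i 1 - Finsupp.single j 1) (idxLo i)
      + ∑ i : Fin n, (sgn k * (k j : ℂ))
          • b (k + Finsupp.single i 1 - Finsupp.single j 1) (idxHi i) := by
    rw [hG, map_add, map_add, map_smul, map_smul, map_sum, map_sum]
    simp only [map_smul, hX0, hXLo, hXHi, smul_add, smul_ite, smul_zero,
      Finset.sum_add_distrib, Finset.sum_ite_eq', Finset.mem_univ, if_true,
      smul_smul, Finset.smul_sum]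
    rw [eLo n k j, eHi n k j, e0 n k j, add_smul]
    abel
  have hRHS : Gamma2 ((-rt2⁻¹ * (k j : ℂ)) • b (k - Finsupp.single j 1) idx0) =
      (-rt2⁻¹ * (k j : ℂ)) • b (k - Finsupp.single j 1) idx0
      + ∑ i : Fin n, (sgn k * (k i : ℂ) * (((k - Finsupp.single i 1 : Fin n →₀ ℕ) j : ℕ) : ℂ))
          • b (k - Finsupp.single i 1 - Finsupp.single j 1) (idxLo i)
      + ∑ i : Fin n, (sgn k * (k j : ℂ))
          • b (k + Finsupp.single i 1 - Finsupp.single j 1) (idxHi i) := by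
    rw [map_smul, hG]
    simp only [smul_add, Finset.smul_sum, smul_smul]
    congr 1
    · congr 1
      refine Finset.sum_congr rfl fun x _ => ?_
      rw [sub_sub_comm_single k j x]
      congr 1
      have hc : ((k j : ℂ)) * (((k - Finsupp.single j 1 : Fin n →₀ ℕ) x : ℕ) : ℂ)
          = ((k x : ℂ)) * (((k - Finsupp.single x 1 : Fin n →₀ ℕ) j : ℕ) : ℂ) := by
        exact_mod_cast congrArg (Nat.cast (R := ℂ)) (cross_nat k j x)
      rw [show -rt2⁻¹ * (k j : ℂ) * (rt2 * (sgn (k - Finsupp.single j 1)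
            * (((k - Finsupp.single j 1 : Fin n →₀ ℕ) x : ℕ) : ℂ)))
          = (rt2 * rt2⁻¹) * ((-(sgn (k - Finsupp.single j 1) * (k j : ℂ)))
            * (((k - Finsupp.single j 1 : Fin n →₀ ℕ) x : ℕ) : ℂ)) by ring,
        rt2_mul_inv, one_mul, sgn_sub_single_mul, neg_neg, mul_assoc, hc]
      ring
    · refine Finset.sum_congr rfl fun x _ => ?_
      by_cases h0 : k j = 0
      · simp [h0]
      · rw [add_sub_comm_single k x j h0]
        congr 1
        rw [show -rt2⁻¹ * (k j : ℂ) * (rt2 * sgn (k - Finsupp.single j 1))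
            = (rt2 * rt2⁻¹) * (-(sgn (k - Finsupp.single j 1) * (k j : ℂ))) by ring,
          rt2_mul_inv, one_mul, sgn_sub_single_mul, neg_neg]
  rw [hLHS, hRHS]
end
end
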